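/- Let G be a topological group with a tower of closed subgroups (G_n)_{n≥1}, and let (G_{n(i)})_{i≥1} be any subsequence of the tower. Then the multiplication map p : ⊡_{n≥1} G_n → G has a local section at e if and only if the multiplication map p' : ⊡_{i≥1} G_{n(i)} → G has a local section at e. -/

import Mathlib

/-- The box topology on the product of the subgroups of a tower. -/
def boxTopOfTower {G : Type*} [Group G] [TopologicalSpace G]
    (K : ℕ → Subgroup G) : TopologicalSpace (∀ n, ↥(K n)) :=
  TopologicalSpace.generateFrom
    {S | ∃ U : ∀ n, Set ↥(K n), (∀ n, IsOpen (U n)) ∧ S = Set.univ.pi U}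

/-- The small box product of a tower of subgroups: sequences with all but finitely
many coordinates equal to the identity. -/
def SBox {G : Type*} [Group G] [TopologicalSpace G] (K : ℕ → Subgroup G) : Type _ :=
  {x : ∀ n, ↥(K n) // {n | (x n : G) ≠ 1}.Finite}

instance {G : Type*} [Group G] [TopologicalSpace G] (K : ℕ → Subgroup G) :
    TopologicalSpace (SBox K) :=
  TopologicalSpace.induced (fun x => x.1) (boxTopOfTower K)

/-- The multiplication map `⊡ₙ Gₙ → G`, sending an eventually-trivial sequence to the
ordered product of its entries. -/
noncomputable def sboxMul {G : Type*} [Group G] [TopologicalSpace G]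
    (K : ℕ → Subgroup G) (x : SBox K) : G :=
  ((List.range (x.2.toFinset.sup id + 1)).map (fun n => (x.1 n : G))).prod

/-- The multiplication map has a local section at the identity. -/
def HasLocalSectionAtOne {G : Type*} [Group G] [TopologicalSpace G]
    (K : ℕ → Subgroup G) (f : SBox K → G) : Prop :=
  ∃ U ∈ nhds (1 : G), ∃ s : G → SBox K, ContinuousOn s U ∧ ∀ g ∈ U, f (s g) = g

namespace LSAux

variable {G : Type*} [Group G] [TopologicalSpace G]

/-! ### Partial products -/

/-- Partial product of the first `N` coordinates. -/
def PP (K : ℕ → Subgroup G) (x : ∀ n, ↥(K n)) (N : ℕ) : G :=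
  ((List.range N).map fun n => (x n : G)).prod

lemma PP_succ (K : ℕ → Subgroup G) (x : ∀ n, ↥(K n)) (N : ℕ) :
    PP K x (N + 1) = PP K x N * (x N : G) := by
  simp [PP, List.range_succ]

lemma PP_stable (K : ℕ → Subgroup G) (x : ∀ n, ↥(K n)) {N : ℕ}
    (h : ∀ n, N ≤ n → (x n : G) = 1) : ∀ M, N ≤ M → PP K x M = PP K x N := by
  intro M hM
  induction M, hM using Nat.le_induction with
  | base => rfl
  | succ M hM ih => rw [PP_succ, h M hM, mul_one, ih]

lemma support_bound (K : ℕ → Subgroup G) (x : SBox K) :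
    ∀ n, x.2.toFinset.sup id + 1 ≤ n → (x.1 n : G) = 1 := by
  intro n hn
  by_contra h
  have h1 : n ∈ x.2.toFinset := x.2.mem_toFinset.mpr h
  have h2 := Finset.le_sup (f := id) h1
  simp only [id] at h2
  omega

lemma sboxMul_eq_PP (K : ℕ → Subgroup G) (x : SBox K) {N : ℕ}
    (h : ∀ n, N ≤ n → (x.1 n : G) = 1) : sboxMul K x = PP K x.1 N := by
  have h0 := support_bound K x
  have e1 : PP K x.1 (max N (x.2.toFinset.sup id + 1)) = PP K x.1 N :=
    PP_stable K x.1 h _ (le_max_left _ _)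
  have e2 : PP K x.1 (max N (x.2.toFinset.sup id + 1)) = PP K x.1 (x.2.toFinset.sup id + 1) :=
    PP_stable K x.1 h0 _ (le_max_right _ _)
  show PP K x.1 (x.2.toFinset.sup id + 1) = PP K x.1 N
  rw [← e2, e1]

/-! ### Blocks -/

/-- Start of the `i`-th block. -/
def bs (m : ℕ → ℕ) : ℕ → ℕ
  | 0 => 0
  | (i + 1) => m i + 1

/-- The `i`-th block, as a list: `[bs m i, …, m i]`. -/
def blk (m : ℕ → ℕ) (i : ℕ) : List ℕ := List.range' (bs m i) (m i + 1 - bs m i)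

variable {m : ℕ → ℕ}

lemma bs_le (hm : StrictMono m) (i : ℕ) : bs m i ≤ m i := by
  cases i with
  | zero => exact Nat.zero_le _
  | succ i => simpa [bs] using hm (Nat.lt_succ_self i)

lemma bs_ge (hm : StrictMono m) (i : ℕ) : i ≤ bs m i := by
  cases i with
  | zero => exact Nat.zero_le _
  | succ i => have : i ≤ m i := hm.le_apply; simp only [bs]; omega

lemma mem_blk (hm : StrictMono m) {n i : ℕ} : n ∈ blk m i ↔ bs m i ≤ n ∧ n ≤ m i := by
  have := bs_le hm i
  rw [blk, List.mem_range'_1]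
  omega

/-- Index of the block containing `n`. -/
noncomputable def bidx (hm : StrictMono m) (n : ℕ) : ℕ :=
  Nat.find (p := fun i => n ≤ m i) ⟨n, hm.le_apply⟩

lemma bidx_spec (hm : StrictMono m) (n : ℕ) :
    n ≤ m (bidx hm n) ∧ ∀ i, i < bidx hm n → m i < n := by
  constructor
  · exact Nat.find_spec (p := fun i => n ≤ m i) ⟨n, hm.le_apply⟩
  · intro i hi
    unfold bidx at hi
    have := Nat.find_min (p := fun i => n ≤ m i) ⟨n, hm.le_apply⟩ hi
    omega

lemma mem_blk_bidx (hm : StrictMono m) (n : ℕ) : n ∈ blk m (bidx hm n) := by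
  obtain ⟨h1, h2⟩ := bidx_spec hm n
  rw [mem_blk hm]
  refine ⟨?_, h1⟩
  cases hj : bidx hm n with
  | zero => simp [bs]
  | succ i =>
    have := h2 i (by omega)
    simp only [bs]; omega

lemma blk_unique (hm : StrictMono m) {n i : ℕ} (h : n ∈ blk m i) : bidx hm n = i := by
  rw [mem_blk hm] at h
  obtain ⟨hs, hmi⟩ := h
  obtain ⟨h1, h2⟩ := bidx_spec hm n
  by_contra hne
  rcases lt_or_gt_of_ne hne with hlt | hgt
  · cases i with
    | zero => omega
    | succ i' =>
      have hmono : m (bidx hm n) ≤ m i' := hm.monotone (by omega)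
      simp only [bs] at hs
      omega
  · have := h2 i hgt
    omega

variable {K : ℕ → Subgroup G}

/-- Block product of a sequence. -/
def blkP (K : ℕ → Subgroup G) (m : ℕ → ℕ) (i : ℕ) (x : ∀ n, ↥(K n)) : G :=
  ((blk m i).map fun n => (x n : G)).prod

lemma blkP_mem (hK : ∀ a b : ℕ, a ≤ b → K a ≤ K b) (hm : StrictMono m)
    (x : ∀ n, ↥(K n)) (i : ℕ) : blkP K m i x ∈ K (m i) := by
  show ((blk m i).map fun n => (x n : G)).prod ∈ K (m i)
  apply list_prod_mem
  intro g hg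
  simp only [List.mem_map] at hg
  obtain ⟨n, hn, rfl⟩ := hg
  exact hK n (m i) ((mem_blk hm).mp hn).2 (x n).2

/-- The grouping map `π : ⊡ₙ Gₙ → ⊡ᵢ G_{m i}`. -/
noncomputable def piMap (hK : ∀ a b : ℕ, a ≤ b → K a ≤ K b) (hm : StrictMono m)
    (x : SBox K) : SBox (fun i => K (m i)) :=
  ⟨fun i => ⟨blkP K m i x.1, blkP_mem hK hm x.1 i⟩, by
    apply Set.Finite.subset (Set.finite_Iic (x.2.toFinset.sup id))
    intro i hi
    simp only [Set.mem_setOf_eq] at hi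
    simp only [Set.mem_Iic]
    by_contra hgt
    push_neg at hgt
    apply hi
    show ((blk m i).map fun n => (x.1 n : G)).prod = 1
    apply List.prod_eq_one
    intro g hg
    simp only [List.mem_map] at hg
    obtain ⟨n, hn, rfl⟩ := hg
    have h1 : bs m i ≤ n := ((mem_blk hm).mp hn).1
    have h2 : i ≤ bs m i := bs_ge hm i
    exact support_bound K x n (by omega)⟩

lemma telescope (hm : StrictMono m) (x : ∀ n, ↥(K n)) (j : ℕ) :
    ((List.range (j + 1)).map fun i => blkP K m i x).prod = PP K x (m j + 1) := by
  induction j with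
  | zero =>
    simp only [List.range_succ, List.range_zero, List.nil_append, List.map_cons,
      List.map_nil, List.prod_cons, List.prod_nil, mul_one, one_mul]
    rw [blkP, blk, PP, List.range_eq_range']
    norm_num [bs]
  | succ j ih =>
    rw [List.range_succ, List.map_append, List.prod_append, ih]
    simp only [List.map_cons, List.map_nil, List.prod_cons, List.prod_nil, mul_one]
    rw [PP, PP, blkP, blk, List.range_eq_range', List.range_eq_range',
      ← List.prod_append, ← List.map_append]
    congr 1
    have hb : bs m (j + 1) = m j + 1 := rfl
    rw [hb]
    have hlt : m j < m (j + 1) := hm (by omega)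
    have key := List.range'_append (s := 0) (m := m j + 1) (n := m (j + 1) + 1 - (m j + 1)) (step := 1)
    simp only [one_mul, zero_add] at key
    have h2 : (m j + 1) + (m (j + 1) + 1 - (m j + 1)) = m (j + 1) + 1 := by omega
    rw [h2] at key
    rw [key]

lemma sboxMul_piMap (hK : ∀ a b : ℕ, a ≤ b → K a ≤ K b) (hm : StrictMono m) (x : SBox K) :
    sboxMul (fun i => K (m i)) (piMap hK hm x) = sboxMul K x := by
  set y := piMap hK hm x with hy
  set j := max (x.2.toFinset.sup id + 1) (y.2.toFinset.sup id + 1) with hj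
  have hxb : ∀ n, m j + 1 ≤ n → (x.1 n : G) = 1 := by
    intro n hn
    have h1 : j ≤ m j := hm.le_apply
    exact support_bound K x n (by omega)
  have hyb : ∀ i, j + 1 ≤ i → (y.1 i : G) = 1 := by
    intro i hi
    exact support_bound _ y i (by omega)
  rw [sboxMul_eq_PP _ y hyb, sboxMul_eq_PP _ x hxb]
  have ht := telescope (K := K) hm x.1 j
  calc PP (fun i => K (m i)) y.1 (j + 1)
      = ((List.range (j + 1)).map fun i => blkP K m i x.1).prod := rfl
    _ = PP K x.1 (m j + 1) := ht

private lemma mem_shift {K : ℕ → Subgroup G} {a n : ℕ} (z : ↥(K a)) (h : a = n) :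
    (z : G) ∈ K n := h ▸ z.2

open Classical in
/-- The inclusion map `η : ⊡ᵢ G_{m i} → ⊡ₙ Gₙ`. -/
noncomputable def etaMap (hm : StrictMono m) (y : SBox (fun i => K (m i))) : SBox K :=
  ⟨fun n => if h : ∃ i, m i = n then
      ⟨(y.1 h.choose : G), mem_shift (y.1 h.choose) h.choose_spec⟩ else 1, by
    apply Set.Finite.subset (y.2.image m)
    intro n hn
    simp only [Set.mem_setOf_eq] at hn
    by_cases h : ∃ i, m i = n
    · rw [dif_pos h] at hn
      exact ⟨h.choose, hn, h.choose_spec⟩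
    · rw [dif_neg h] at hn
      simp at hn⟩

lemma eta_apply_m (hm : StrictMono m) (y : SBox (fun i => K (m i))) (i : ℕ) :
    ((etaMap hm y).1 (m i) : G) = (y.1 i : G) := by
  simp only [etaMap]
  rw [dif_pos (⟨i, rfl⟩ : ∃ j, m j = m i)]
  generalize_proofs h
  have hc : h.choose = i := hm.injective h.choose_spec
  show ((y.1 h.choose : G)) = (y.1 i : G)
  rw [hc]

lemma eta_apply_not (hm : StrictMono m) (y : SBox (fun i => K (m i))) (n : ℕ)
    (h : ¬ ∃ i, m i = n) : (etaMap hm y).1 n = 1 := by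
  simp only [etaMap]
  rw [dif_neg h]

lemma piMap_etaMap (hK : ∀ a b : ℕ, a ≤ b → K a ≤ K b) (hm : StrictMono m)
    (y : SBox (fun i => K (m i))) : piMap hK hm (etaMap hm y) = y := by
  apply Subtype.ext; funext i; apply Subtype.ext
  show blkP K m i (etaMap hm y).1 = (y.1 i : G)
  have hbs := bs_le hm i
  have hlen : m i + 1 - bs m i = (m i - bs m i) + 1 := by omega
  rw [blkP, blk, hlen, List.range'_concat]
  have hs : bs m i + 1 * (m i - bs m i) = m i := by omega
  rw [hs, List.map_append, List.prod_append]
  have h1 : ((List.range' (bs m i) (m i - bs m i)).map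
      fun n => ((etaMap hm y).1 n : G)).prod = 1 := by
    apply List.prod_eq_one
    intro g hg
    simp only [List.mem_map] at hg
    obtain ⟨n, hn, rfl⟩ := hg
    rw [List.mem_range'_1] at hn
    rw [eta_apply_not hm y n ?_]
    · simp
    · rintro ⟨j, rfl⟩
      have hlt : m j < m i := by omega
      have hji : j < i := hm.lt_iff_lt.mp hlt
      cases i with
      | zero => omega
      | succ i' =>
        simp only [bs] at hn
        have : i' < j := hm.lt_iff_lt.mp (by omega)
        omega
  rw [h1, one_mul]
  simp only [List.map_cons, List.map_nil, List.prod_cons, List.prod_nil, mul_one]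
  exact eta_apply_m hm y i

lemma sboxMul_etaMap (hK : ∀ a b : ℕ, a ≤ b → K a ≤ K b) (hm : StrictMono m)
    (y : SBox (fun i => K (m i))) :
    sboxMul K (etaMap hm y) = sboxMul (fun i => K (m i)) y := by
  rw [← sboxMul_piMap hK hm (etaMap hm y), piMap_etaMap hK hm]

/-! ### Topology -/

lemma isOpen_box (K : ℕ → Subgroup G) (U : ∀ n, Set ↥(K n)) (hU : ∀ n, IsOpen (U n)) :
    @IsOpen _ (boxTopOfTower K) (Set.univ.pi U) :=
  TopologicalSpace.isOpen_generateFrom_of_mem ⟨U, hU, rfl⟩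

lemma key_mul (K : ℕ → Subgroup G) [IsTopologicalGroup G] :
    ∀ (l : List ℕ) (x : ∀ n, ↥(K n)) (V : Set G), IsOpen V →
      ((l.map fun n => (x n : G)).prod ∈ V) →
      ∃ W : ∀ n, Set ↥(K n), (∀ n, IsOpen (W n)) ∧ (∀ n, x n ∈ W n) ∧
        ∀ y : ∀ n, ↥(K n), (∀ n ∈ l, y n ∈ W n) →
          (l.map fun n => (y n : G)).prod ∈ V := by
  intro l
  induction l with
  | nil =>
    intro x V hV h1
    exact ⟨fun _ => Set.univ, fun _ => isOpen_univ, fun _ => trivial,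
      fun y _ => by simpa using h1⟩
  | cons a l ih =>
    intro x V hV h1
    simp only [List.map_cons, List.prod_cons] at h1
    have hopen : IsOpen {p : G × G | p.1 * p.2 ∈ V} := hV.preimage continuous_mul
    have hmem : ((x a : G), (l.map fun n => (x n : G)).prod) ∈ {p : G × G | p.1 * p.2 ∈ V} := h1
    obtain ⟨A, hA, B, hB, hAB⟩ := mem_nhds_prod_iff.mp (hopen.mem_nhds hmem)
    obtain ⟨A', hA's, hA'o, hA'm⟩ := mem_nhds_iff.mp hA
    obtain ⟨B', hB's, hB'o, hB'm⟩ := mem_nhds_iff.mp hB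
    obtain ⟨W, hWo, hWm, hW⟩ := ih x B' hB'o hB'm
    refine ⟨fun n => W n ∩ (if n = a then (Subtype.val ⁻¹' A' : Set ↥(K n)) else Set.univ),
      ?_, ?_, ?_⟩
    · intro n
      apply (hWo n).inter
      split
      · exact hA'o.preimage continuous_subtype_val
      · exact isOpen_univ
    · intro n
      refine ⟨hWm n, ?_⟩
      split
      · next h => subst h; exact hA'm
      · trivial
    · intro y hy
      simp only [List.map_cons, List.prod_cons]
      have hya : (y a : G) ∈ A' := by
        have h2 := (hy a List.mem_cons_self).2
        simpa using h2
      have hrest : (l.map fun n => (y n : G)).prod ∈ B' :=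
        hW y fun n hn => (hy n (List.mem_cons_of_mem a hn)).1
      exact hAB (Set.mk_mem_prod (hA's hya) (hB's hrest))

lemma continuous_piMap [IsTopologicalGroup G]
    (hK : ∀ a b : ℕ, a ≤ b → K a ≤ K b) (hm : StrictMono m) :
    Continuous (fun x : SBox K => piMap hK hm x) := by
  rw [continuous_induced_rng]
  apply continuous_generateFrom_iff.mpr
  rintro S ⟨V, hVo, rfl⟩
  rw [isOpen_iff_mem_nhds]
  intro x hx
  simp only [Set.mem_preimage, Function.comp_apply] at hx
  have hex := fun i => isOpen_induced_iff.mp (hVo i)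
  choose O hOo hOe using hex
  have hblk : ∀ i, blkP K m i x.1 ∈ O i := by
    intro i
    have h1 := Set.mem_univ_pi.mp hx i
    rw [← hOe i] at h1
    exact h1
  have hkey := fun i => key_mul K (blk m i) x.1 (O i) (hOo i) (hblk i)
  choose W hWo hWm hW using hkey
  rw [mem_nhds_induced (T := boxTopOfTower K) (fun x : SBox K => x.1) x]
  refine ⟨Set.univ.pi (fun n => W (bidx hm n) n), ?_, ?_⟩
  · exact @IsOpen.mem_nhds _ (boxTopOfTower K) _ _ (isOpen_box K _ (fun n => hWo _ n))
      (Set.mem_univ_pi.mpr fun n => hWm _ n)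
  · intro y hy
    simp only [Set.mem_preimage, Function.comp_apply] at hy ⊢
    rw [Set.mem_univ_pi]
    intro i
    rw [← hOe i]
    show blkP K m i y.1 ∈ O i
    apply hW i y.1
    intro n hn
    have hb : bidx hm n = i := blk_unique hm hn
    have h2 := Set.mem_univ_pi.mp hy n
    rwa [hb] at h2

lemma continuous_etaMap (hm : StrictMono m) :
    Continuous (fun y : SBox (fun i => K (m i)) => etaMap hm y) := by
  rw [continuous_induced_rng]
  apply continuous_generateFrom_iff.mpr
  rintro S ⟨U, hUo, rfl⟩
  by_cases hall : ∀ n, (¬ ∃ i, m i = n) → (1 : ↥(K n)) ∈ U n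
  · have hpre : ((fun x : SBox K => x.1) ∘ fun y : SBox (fun i => K (m i)) => etaMap hm y)
        ⁻¹' (Set.univ.pi U) =
        (fun y : SBox (fun i => K (m i)) => y.1) ⁻¹' (Set.univ.pi fun i => U (m i)) := by
      ext y
      simp only [Set.mem_preimage, Set.mem_univ_pi, Function.comp_apply]
      constructor
      · intro h i
        have h1 := h (m i)
        have he : (etaMap hm y).1 (m i) = y.1 i := Subtype.ext (eta_apply_m hm y i)
        rwa [he] at h1
      · intro h n
        by_cases hn : ∃ i, m i = n
        · obtain ⟨i, rfl⟩ := hn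
          have he : (etaMap hm y).1 (m i) = y.1 i := Subtype.ext (eta_apply_m hm y i)
          rw [he]
          exact h i
        · rw [eta_apply_not hm y n hn]
          exact hall n hn
    rw [hpre]
    exact @IsOpen.preimage (SBox (fun i => K (m i))) (∀ i, ↥(K (m i))) _
      (boxTopOfTower (fun i => K (m i))) (fun y => y.1)
      (continuous_induced_dom (t := boxTopOfTower (fun i => K (m i)))) _
      (isOpen_box (fun i => K (m i)) _ (fun i => hUo (m i)))
  · push_neg at hall
    obtain ⟨n, hn1, hn2⟩ := hall
    have hpre : ((fun x : SBox K => x.1) ∘ fun y : SBox (fun i => K (m i)) => etaMap hm y)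
        ⁻¹' (Set.univ.pi U) = ∅ := by
      ext y
      simp only [Set.mem_preimage, Set.mem_empty_iff_false, iff_false, Function.comp_apply]
      intro h
      have h2 := Set.mem_univ_pi.mp h n
      rw [eta_apply_not hm y n (not_exists.mpr hn1)] at h2
      exact hn2 h2
    rw [hpre]
    exact isOpen_empty

end LSAux

open LSAux in
/-- The multiplication map of a tower of closed subgroups has a local section at the
identity iff the multiplication map of any subsequence of the tower does. -/
theorem local_section_iff_subsequence
    {G : Type*} [Group G] [TopologicalSpace G] [IsTopologicalGroup G]
    (K : ℕ → Subgroup G)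
    (htower : ∀ n, K n ≤ K (n + 1))
    (hclosed : ∀ n, IsClosed ((K n : Set G)))
    (hunion : ∀ g : G, ∃ n, g ∈ K n)
    (m : ℕ → ℕ) (hm : StrictMono m) :
    HasLocalSectionAtOne K (sboxMul K) ↔
      HasLocalSectionAtOne (fun i => K (m i)) (sboxMul (fun i => K (m i))) := by
  have hK : ∀ a b : ℕ, a ≤ b → K a ≤ K b := by
    intro a b h
    induction b, h using Nat.le_induction with
    | base => exact le_rfl
    | succ b hb ih => exact ih.trans (htower b)
  constructor
  · rintro ⟨U, hU, s, hs, hsec⟩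
    exact ⟨U, hU, fun g => piMap hK hm (s g),
      (continuous_piMap hK hm).comp_continuousOn hs,
      fun g hg => by rw [sboxMul_piMap hK hm, hsec g hg]⟩
  · rintro ⟨U, hU, s, hs, hsec⟩
    exact ⟨U, hU, fun g => etaMap hm (s g),
      (continuous_etaMap hm).comp_continuousOn hs,
      fun g hg => by rw [sboxMul_etaMap hK hm, hsec g hg]⟩
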